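/- Let G be a finite simple graph, let v be a vertex of G, and let u be a vertex with u ∉ N[v] (where N[v] denotes the closed neighborhood of v) such that every neighbor of u in G lies in N[v] (i.e., u is an isolated vertex of the induced subgraph G ∖ N[v]). Then the independence complex I(G) collapses onto I(G ∖ {v}), where G ∖ {v} is the induced subgraph of G on V(G) ∖ {v}. -/

import Mathlib

/-! ## Abstract simplicial complexes, collapses, simple homotopy type -/

/-- `K` is obtained from `L` by removing a free pair `(σ, τ)`:
`σ ⊊ τ`, `|τ| = |σ| + 1`, and `τ` is the unique face of `K` strictly containing `σ`. -/
def IsElemCollapse {V : Type} [DecidableEq V] (K L : Finset (Finset V)) : Prop :=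
  ∃ σ τ : Finset V, σ ∈ K ∧ τ ∈ K ∧ σ ⊂ τ ∧ τ.card = σ.card + 1 ∧
    (∀ ρ ∈ K, σ ⊂ ρ → ρ = τ) ∧ L = K \ {σ, τ}

/-- `K` collapses onto `L` by a finite sequence of elementary collapses. -/
def Collapses {V : Type} [DecidableEq V] (K L : Finset (Finset V)) : Prop :=
  Relation.ReflTransGen (fun A B => IsElemCollapse A B) K L

/-- A finite abstract simplicial complex (with its ambient vertex type). -/
structure AbsCplx : Type 1 where
  V : Type
  [deceq : DecidableEq V]
  faces : Finset (Finset V)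
  empty_mem : ∅ ∈ faces
  down_closed : ∀ σ ∈ faces, ∀ τ ⊆ σ, τ ∈ faces

attribute [instance] AbsCplx.deceq

/-- Isomorphism of abstract simplicial complexes: an injection of the vertices
(the vertices being the elements occurring in faces) carrying faces exactly to faces. -/
def AbsCplx.Iso (K L : AbsCplx) : Prop :=
  ∃ f : K.V → L.V, Set.InjOn f {v | ({v} : Finset K.V) ∈ K.faces} ∧
    L.faces = K.faces.image (Finset.image f)

/-- One step: an isomorphism or an elementary collapse. -/
def AbsCplx.Step (K L : AbsCplx) : Prop :=
  K.Iso L ∨ ∃ h : K.V = L.V, IsElemCollapse (h ▸ K.faces) L.faces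

/-- Same simple homotopy type: finite zigzag of elementary collapses,
elementary expansions, and isomorphisms. -/
def SimpleHtpyEq (K L : AbsCplx) : Prop := Relation.EqvGen AbsCplx.Step K L

/-! ## Join, suspension, spheres, wedges, point -/

/-- Join of two complexes, on the disjoint union of the vertex types. -/
def AbsCplx.join (K L : AbsCplx) : AbsCplx where
  V := K.V ⊕ L.V
  faces := (K.faces ×ˢ L.faces).image fun p => p.1.disjSum p.2
  empty_mem := by
    refine Finset.mem_image.2 ⟨(∅, ∅), Finset.mem_product.2 ⟨K.empty_mem, L.empty_mem⟩, ?_⟩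
    ext x
    cases x <;> simp [Finset.inl_mem_disjSum, Finset.inr_mem_disjSum]
  down_closed := by
    intro σ hσ τ hτ
    rcases Finset.mem_image.1 hσ with ⟨p, hp, rfl⟩
    rcases Finset.mem_product.1 hp with ⟨hp1, hp2⟩
    refine Finset.mem_image.2
      ⟨(p.1.filter (fun v => Sum.inl v ∈ τ), p.2.filter (fun w => Sum.inr w ∈ τ)), ?_, ?_⟩
    · exact Finset.mem_product.2
        ⟨K.down_closed _ hp1 _ (Finset.filter_subset _ _),
         L.down_closed _ hp2 _ (Finset.filter_subset _ _)⟩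
    · ext x
      cases x with
      | inl v =>
        simp only [Finset.inl_mem_disjSum, Finset.mem_filter]
        exact ⟨fun h => h.2, fun h => ⟨Finset.inl_mem_disjSum.1 (hτ h), h⟩⟩
      | inr w =>
        simp only [Finset.inr_mem_disjSum, Finset.mem_filter]
        exact ⟨fun h => h.2, fun h => ⟨Finset.inr_mem_disjSum.1 (hτ h), h⟩⟩

/-- `∂Δ¹`: two vertices, no edge. -/
def sphere0 : AbsCplx where
  V := Bool
  faces := {∅, {false}, {true}}
  empty_mem := by decide
  down_closed := by decide

/-- The one point complex. -/
def ptCplx : AbsCplx where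
  V := Unit
  faces := {∅, {()}}
  empty_mem := by decide
  down_closed := by decide

/-- Suspension `ΣK = K * ∂Δ¹`. -/
def AbsCplx.susp (K : AbsCplx) : AbsCplx := K.join sphere0

/-- Iterated suspension `Σ^m K`. -/
def AbsCplx.nsusp (K : AbsCplx) (m : ℕ) : AbsCplx := AbsCplx.susp^[m] K

/-- `◊ⁿ`, the join of `n+1` copies of `∂Δ¹` (a triangulated `n`-sphere). -/
def diamond : ℕ → AbsCplx
  | 0 => sphere0
  | n + 1 => (diamond n).join sphere0

/-- A chosen base vertex of `◊ⁿ`. -/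
def diamondPt : (n : ℕ) → (diamond n).V
  | 0 => true
  | _ + 1 => Sum.inr true

/-- Wedge of `m` copies of `K`, identifying the chosen vertex `v₀` of each copy
to a single common vertex. -/
def wedge (m : ℕ) (K : AbsCplx) (v₀ : K.V) : AbsCplx where
  V := Option (Fin m × K.V)
  faces := insert ∅ ((Finset.univ (α := Fin m) ×ˢ K.faces).image fun p =>
    p.2.image fun v => if v = v₀ then none else some (p.1, v))
  empty_mem := Finset.mem_insert_self _ _
  down_closed := by
    intro σ hσ τ hτ
    rcases Finset.mem_insert.1 hσ with h | h
    · subst h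
      rw [Finset.subset_empty.1 hτ]
      exact Finset.mem_insert_self _ _
    · rcases Finset.mem_image.1 h with ⟨p, hp, rfl⟩
      rcases Finset.mem_product.1 hp with ⟨-, hp2⟩
      rcases Finset.subset_image_iff.1 hτ with ⟨τ₀, hτ₀, rfl⟩
      exact Finset.mem_insert.2 (Or.inr (Finset.mem_image.2
        ⟨(p.1, τ₀), Finset.mem_product.2 ⟨Finset.mem_univ _, K.down_closed _ hp2 _ hτ₀⟩, rfl⟩))

/-! ## Graphs and independence complexes -/

/-- The closed neighborhood `N[v]`. -/
def closedNbhd {V : Type} (G : SimpleGraph V) (v : V) : Set V := insert v {w | G.Adj v w}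

/-- The graph `G - e` obtained by removing the edge `vw`. -/
def deleteEdge {V : Type} [DecidableEq V] (G : SimpleGraph V) (v w : V) : SimpleGraph V where
  Adj a b := G.Adj a b ∧ s(a, b) ≠ s(v, w)
  symm := by
    refine ⟨fun a b h => ?_⟩
    exact ⟨G.symm.symm _ _ h.1, by rw [Sym2.eq_swap]; exact h.2⟩
  loopless := ⟨fun a h => G.loopless.irrefl a h.1⟩

instance {V : Type} [DecidableEq V] (G : SimpleGraph V) [DecidableRel G.Adj] (v w : V) :
    DecidableRel (deleteEdge G v w).Adj := fun a b =>
  inferInstanceAs (Decidable (G.Adj a b ∧ s(a, b) ≠ s(v, w)))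

/-- Independent finsets of `G` contained in the vertex set `s`
(the faces of the independence complex of the induced subgraph of `G` on `s`). -/
def indepFacesOn {V : Type} [Fintype V] [DecidableEq V] (G : SimpleGraph V)
    [DecidableRel G.Adj] (s : Finset V) : Finset (Finset V) :=
  s.powerset.filter fun t => ∀ a ∈ t, ∀ b ∈ t, ¬ G.Adj a b

/-- The faces of the independence complex `I(G)`. -/
def indepFaces {V : Type} [Fintype V] [DecidableEq V] (G : SimpleGraph V)
    [DecidableRel G.Adj] : Finset (Finset V) :=
  indepFacesOn G Finset.univ

/-- The independence complex `I(G)` as an abstract simplicial complex. -/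
def indepCplx {V : Type} [Fintype V] [DecidableEq V] (G : SimpleGraph V)
    [DecidableRel G.Adj] : AbsCplx where
  V := V
  faces := indepFaces G
  empty_mem := by simp [indepFaces, indepFacesOn]
  down_closed := by
    intro σ hσ τ hτ
    simp only [indepFaces, indepFacesOn, Finset.mem_filter, Finset.mem_powerset] at hσ ⊢
    exact ⟨hτ.trans hσ.1, fun a ha b hb => hσ.2 a (hτ ha) b (hτ hb)⟩

/-- Reduced Euler characteristic of a finite complex given by its set of faces. -/
def redEuler {V : Type} [DecidableEq V] (K : Finset (Finset V)) : ℤ :=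
  ∑ σ ∈ K.filter (fun σ => σ ≠ ∅), (-1 : ℤ) ^ (σ.card - 1)

/-! ## Grid graphs (0-indexed models of the 1-indexed graphs of the paper) -/

/-- The planar grid graph `P_{m,n}`. -/
def gridP (m n : ℕ) : SimpleGraph (Fin m × Fin n) :=
  SimpleGraph.fromRel fun u v =>
    |(u.1 : ℤ) - (v.1 : ℤ)| + |(u.2 : ℤ) - (v.2 : ℤ)| = 1

instance (m n : ℕ) : DecidableRel (gridP m n).Adj := fun a b =>
  decidable_of_iff _ (SimpleGraph.fromRel_adj _ a b).symm

/-- The cylindrical grid graph `C_{m,n}`: columns indexed cyclically. -/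
def gridC (m n : ℕ) : SimpleGraph (Fin m × Fin n) :=
  SimpleGraph.fromRel fun u v =>
    (u.1 = v.1 ∧ (v.2 : ℕ) = ((u.2 : ℕ) + 1) % n) ∨
    ((u.1 : ℕ) + 1 = (v.1 : ℕ) ∧ u.2 = v.2)

instance (m n : ℕ) : DecidableRel (gridC m n).Adj := fun a b =>
  decidable_of_iff _ (SimpleGraph.fromRel_adj _ a b).symm

/-- The Möbius grid graph `M_{m,n}`. -/
def gridM (m n : ℕ) : SimpleGraph (Fin m × Fin n) :=
  SimpleGraph.fromRel fun u v =>
    ((u.1 : ℕ) + 1 = (v.1 : ℕ) ∧ u.2 = v.2) ∨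
    (u.1 = v.1 ∧ (u.2 : ℕ) + 1 = (v.2 : ℕ)) ∨
    ((u.2 : ℕ) = n - 1 ∧ (v.2 : ℕ) = 0 ∧ (u.1 : ℕ) + (v.1 : ℕ) = m - 1)

instance (m n : ℕ) : DecidableRel (gridM m n).Adj := fun a b =>
  decidable_of_iff _ (SimpleGraph.fromRel_adj _ a b).symm

/-- The cylindrical hexagonal grid graph `C^H_{1,n}`: obtained from `C_{2,2n}`
by deleting the vertical edges in the even columns. -/
def gridCH (n : ℕ) : SimpleGraph (Fin 2 × Fin (2 * n)) :=
  SimpleGraph.fromRel fun u v =>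
    (u.1 = v.1 ∧ (v.2 : ℕ) = ((u.2 : ℕ) + 1) % (2 * n)) ∨
    ((u.1 : ℕ) + 1 = (v.1 : ℕ) ∧ u.2 = v.2 ∧ ¬ Even (u.2 : ℕ))

instance (n : ℕ) : DecidableRel (gridCH n).Adj := fun a b =>
  decidable_of_iff _ (SimpleGraph.fromRel_adj _ a b).symm

/-- `M^H_{1,n}`: obtained from `M_{2,2n}` by deleting the vertical edges in the
odd columns (`1`-indexed), i.e. the even columns in this `0`-indexed model. -/
def gridMH (n : ℕ) : SimpleGraph (Fin 2 × Fin (2 * n)) :=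
  SimpleGraph.fromRel fun u v =>
    ((u.1 : ℕ) + 1 = (v.1 : ℕ) ∧ u.2 = v.2 ∧ ¬ Even (u.2 : ℕ)) ∨
    (u.1 = v.1 ∧ (u.2 : ℕ) + 1 = (v.2 : ℕ)) ∨
    ((u.2 : ℕ) = 2 * n - 1 ∧ (v.2 : ℕ) = 0 ∧ (u.1 : ℕ) + (v.1 : ℕ) = 1)

instance (n : ℕ) : DecidableRel (gridMH n).Adj := fun a b =>
  decidable_of_iff _ (SimpleGraph.fromRel_adj _ a b).symm

/-- If `u ∉ N[v]` and every neighbor of `u` lies in `N[v]`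
(so `u` is isolated in `G ∖ N[v]`), then `I(G)` collapses onto `I(G ∖ {v})`. -/
theorem indepFaces_collapses_of_isolated {V : Type} [Fintype V] [DecidableEq V]
    (G : SimpleGraph V) [DecidableRel G.Adj] (v u : V)
    (hu : u ∉ closedNbhd G v)
    (hnbr : ∀ w : V, G.Adj u w → w ∈ closedNbhd G v) :
    Collapses (indepFaces G) (indepFacesOn G (Finset.univ.erase v)) := by
  classical
  have hu' : u ≠ v ∧ ¬ G.Adj v u := by
    simpa [closedNbhd] using hu
  set L := indepFacesOn G (Finset.univ.erase v) with hLdef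
  have hmemF : ∀ σ : Finset V, σ ∈ indepFaces G ↔ ∀ a ∈ σ, ∀ b ∈ σ, ¬ G.Adj a b := by
    intro σ; simp [indepFaces, indepFacesOn]
  have hmemL : ∀ σ : Finset V, σ ∈ L ↔ (v ∉ σ ∧ ∀ a ∈ σ, ∀ b ∈ σ, ¬ G.Adj a b) := by
    intro σ
    simp only [hLdef, indepFacesOn, Finset.mem_filter, Finset.mem_powerset,
      Finset.subset_iff, Finset.mem_erase, Finset.mem_univ, and_true]
    constructor
    · rintro ⟨h1, h2⟩
      exact ⟨fun hv => (h1 hv) rfl, h2⟩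
    · rintro ⟨h1, h2⟩
      exact ⟨fun x hx hxv => h1 (hxv ▸ hx), h2⟩
  -- inserting u into a face containing v keeps it a face
  have hins : ∀ σ : Finset V, σ ∈ indepFaces G → v ∈ σ → insert u σ ∈ indepFaces G := by
    intro σ hσ hvσ
    rw [hmemF] at hσ ⊢
    intro a ha b hb
    simp only [Finset.mem_insert] at ha hb
    rcases ha with rfl | ha <;> rcases hb with rfl | hb
    · exact G.loopless.irrefl _
    · intro hadj
      rcases hnbr b hadj with rfl | h
      · exact hu'.2 (G.symm.symm _ _ hadj)
      · exact hσ v hvσ b hb h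
    · intro hadj
      rcases hnbr a (G.symm.symm _ _ hadj) with rfl | h
      · exact hu'.2 hadj
      · exact hσ v hvσ a ha h
    · exact hσ a ha b hb
  have hinj : ∀ a b : Finset V, u ∉ a → u ∉ b → insert u a = insert u b → a = b := by
    intro a b ha hb h
    have := congrArg (fun s => Finset.erase s u) h
    simpa [Finset.erase_insert ha, Finset.erase_insert hb] using this
  suffices H : ∀ n (M : Finset (Finset V)), M.card = n →
      (∀ σ ∈ M, σ ∈ indepFaces G ∧ v ∈ σ ∧ u ∉ σ) →
      Collapses (L ∪ M ∪ M.image (insert u)) L by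
    set M0 := (indepFaces G).filter (fun σ => v ∈ σ ∧ u ∉ σ) with hM0
    have hdecomp : indepFaces G = L ∪ M0 ∪ M0.image (insert u) := by
      ext σ
      simp only [Finset.mem_union, Finset.mem_image, hM0, Finset.mem_filter]
      constructor
      · intro hσ
        by_cases hv : v ∈ σ
        · by_cases huσ : u ∈ σ
          · refine Or.inr ⟨σ.erase u, ⟨⟨?_, ?_, ?_⟩, ?_⟩⟩
            · rw [hmemF] at hσ ⊢
              intro a ha b hb
              exact hσ a (Finset.mem_of_mem_erase ha) b (Finset.mem_of_mem_erase hb)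
            · exact Finset.mem_erase.2 ⟨(Ne.symm hu'.1), hv⟩
            · exact Finset.notMem_erase u σ
            · exact Finset.insert_erase huσ
          · exact Or.inl (Or.inr ⟨hσ, hv, huσ⟩)
        · exact Or.inl (Or.inl ((hmemL σ).2 ⟨hv, (hmemF σ).1 hσ⟩))
      · rintro ((h | h) | ⟨τ, ⟨⟨h1, h2, h3⟩, rfl⟩⟩)
        · exact (hmemF σ).2 ((hmemL σ).1 h).2
        · exact h.1
        · exact hins τ h1 h2
    rw [hdecomp]
    exact H M0.card M0 rfl (fun σ h =>
      ⟨(Finset.mem_filter.1 h).1, (Finset.mem_filter.1 h).2⟩)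
  intro n
  induction n using Nat.strong_induction_on with
  | _ n ih =>
    intro M hMcard hM
    rcases Finset.eq_empty_or_nonempty M with rfl | hne
    · simp only [Finset.image_empty, Finset.union_empty]
      exact Relation.ReflTransGen.refl
    · -- pick σ ∈ M of maximal cardinality
      obtain ⟨σ, hσM, hσmax⟩ := Finset.exists_max_image M Finset.card hne
      obtain ⟨hσF, hvσ, huσ⟩ := hM σ hσM
      set K := L ∪ M ∪ M.image (insert u) with hK
      set M' := M.erase σ with hM'
      set K' := L ∪ M' ∪ M'.image (insert u) with hK'
      have hstep : IsElemCollapse K K' := by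
        refine ⟨σ, insert u σ, ?_, ?_, ?_, ?_, ?_, ?_⟩
        · exact Finset.mem_union.2 (Or.inl (Finset.mem_union.2 (Or.inr hσM)))
        · exact Finset.mem_union.2 (Or.inr (Finset.mem_image_of_mem _ hσM))
        · exact Finset.ssubset_insert huσ
        · rw [Finset.card_insert_of_notMem huσ]
        · -- uniqueness of the coface
          intro ρ hρ hσρ
          rcases Finset.mem_union.1 hρ with hρ' | hρ'
          · rcases Finset.mem_union.1 hρ' with hρL | hρM
            · exact absurd (hσρ.1 hvσ) ((hmemL ρ).1 hρL).1
            · exact absurd (Finset.card_lt_card hσρ) (not_lt.2 (hσmax ρ hρM))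
          · obtain ⟨σ', hσ'M, rfl⟩ := Finset.mem_image.1 hρ'
            have hsub : σ ⊆ σ' := by
              intro x hx
              rcases Finset.mem_insert.1 (hσρ.1 hx) with rfl | h
              · exact absurd hx huσ
              · exact h
            have h2 := Finset.eq_of_subset_of_card_le hsub (hσmax σ' hσ'M)
            rw [h2]
        · -- K' = K \ {σ, insert u σ}
          ext ρ
          simp only [hK', hK, hM', Finset.mem_sdiff, Finset.mem_union,
            Finset.mem_insert, Finset.mem_singleton, Finset.mem_image,
            Finset.mem_erase, not_or]
          constructor
          · rintro ((h | ⟨hne', h⟩) | ⟨τ, ⟨hτne, hτM⟩, rfl⟩)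
            · refine ⟨Or.inl (Or.inl h), ?_, ?_⟩
              · rintro rfl; exact ((hmemL ρ).1 h).1 hvσ
              · rintro rfl
                exact ((hmemL _).1 h).1 (Finset.mem_insert_of_mem hvσ)
            · refine ⟨Or.inl (Or.inr h), hne', ?_⟩
              rintro rfl
              exact (hM _ h).2.2 (Finset.mem_insert_self u σ)
            · refine ⟨Or.inr ⟨τ, hτM, rfl⟩, ?_, ?_⟩
              · rintro rfl; exact huσ (Finset.mem_insert_self u τ)
              · intro h
                exact hτne (hinj τ σ (hM τ hτM).2.2 huσ h)
          · rintro ⟨(h | h) | ⟨τ, hτM, rfl⟩, h1, h2⟩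
            · exact Or.inl (Or.inl h)
            · exact Or.inl (Or.inr ⟨h1, h⟩)
            · refine Or.inr ⟨τ, ⟨?_, hτM⟩, rfl⟩
              rintro rfl; exact h2 rfl
      refine Relation.ReflTransGen.head hstep ?_
      have hlt : M'.card < n := by
        rw [← hMcard, hM']
        exact Finset.card_erase_lt_of_mem hσM
      exact ih M'.card hlt M' rfl (fun τ hτ => hM τ (Finset.mem_of_mem_erase hτ))
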